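/- Let ω = s/q with s, q coprime polynomials, q having all roots on the unit circle, deg(q) = m, and suppose ω(T) ⊂ ℝ (ω maps the unit circle into the reals where defined). Let γ be the unimodular constant with q = γ q^♯, and set l_± = m − deg(s ± i q). Then s + i q = γ z^{l_−} (s − i q)^♯ and s − i q = γ z^{l_+} (s + i q)^♯. -/

import Mathlib

open Polynomial

/-- The conjugate-reversed polynomial. -/
noncomputable def sharp (r : Polynomial ℂ) : Polynomial ℂ :=
  (r.map (starRingEnd ℂ)).reverse

lemma eval_reverse' (f : Polynomial ℂ) (z : ℂ) (hz : z ≠ 0) :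
    f.reverse.eval z = z ^ f.natDegree * f.eval z⁻¹ := by
  have : Invertible z⁻¹ := invertibleOfNonzero (inv_ne_zero hz)
  have h := Polynomial.eval₂_reverse_mul_pow (RingHom.id ℂ) z⁻¹ f
  rw [invOf_eq_inv, inv_inv] at h
  have h' : f.reverse.eval z * z⁻¹ ^ f.natDegree = f.eval z⁻¹ := h
  rw [← h']
  field_simp
  rw [mul_assoc, ← mul_pow, mul_one_div_cancel hz, one_pow, mul_one]

lemma sharp_eval (r : Polynomial ℂ) (z : ℂ) (hz : ‖z‖ = 1) :
    (sharp r).eval z = z ^ r.natDegree * (starRingEnd ℂ) (r.eval z) := by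
  have hz0 : z ≠ 0 := by intro h; rw [h] at hz; simp at hz
  have hinv : z⁻¹ = (starRingEnd ℂ) z := by
    rw [Complex.inv_def]
    simp [Complex.normSq_eq_norm_sq, hz]
  rw [sharp, eval_reverse' _ _ hz0, natDegree_map, hinv, ← Polynomial.eval₂_at_apply,
    Polynomial.eval_map]

lemma circle_infinite : Set.Infinite {z : ℂ | ‖z‖ = 1} := by
  apply Set.infinite_of_injective_forall_mem
    (f := fun n : ℕ => Complex.exp (Complex.I * ((1/((n:ℝ)+1) : ℝ) : ℂ)))
  · intro a b hab
    simp only [Complex.exp_eq_exp_iff_exists_int] at hab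
    obtain ⟨k, hk⟩ := hab
    set x : ℝ := 1/((a:ℝ)+1) with hx
    set y : ℝ := 1/((b:ℝ)+1) with hy
    have him := congrArg Complex.im hk
    simp [Complex.mul_im] at him
    have hx0 : 0 < x := by rw [hx]; positivity
    have hy0 : 0 < y := by rw [hy]; positivity
    have hx1 : x ≤ 1 := by rw [hx]; rw [div_le_one (by positivity)]; linarith [Nat.cast_nonneg (α := ℝ) a]
    have hy1 : y ≤ 1 := by rw [hy]; rw [div_le_one (by positivity)]; linarith [Nat.cast_nonneg (α := ℝ) b]
    have hπ := Real.pi_gt_three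
    have hk0 : k = 0 := by
      by_contra hkk
      have h1 : (1:ℝ) ≤ |(k:ℝ)| := by exact_mod_cast Int.one_le_abs hkk
      have h3 : |x - y| = |(k:ℝ)| * (2*Real.pi) := by
        rw [show x - y = (k:ℝ) * (2*Real.pi) by linarith, abs_mul,
          abs_of_pos (show (0:ℝ) < 2*Real.pi by linarith)]
      have h2 : |x - y| < 1 := by rw [abs_lt]; constructor <;> nlinarith
      nlinarith
    rw [hk0] at him
    simp at him
    rw [hx, hy] at him
    field_simp at him
    exact Nat.add_right_cancel (by exact_mod_cast him.symm)
  · intro n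
    simp [Complex.norm_exp, Complex.mul_re]


/-- If `ω = s/q`, `q` with all roots on the unit circle, `ω(𝕋) ⊆ ℝ`, and `γ` is the
unimodular constant with `q = γ q^♯`, then with `l_± = m − deg(s ± iq)` one has
`s + iq = γ z^(l_−) (s − iq)^♯` and `s − iq = γ z^(l_+) (s + iq)^♯`. -/
theorem ids_s_pm_iq (s q : Polynomial ℂ) (γ : ℂ)
    (hcop : IsCoprime s q) (hq : q ≠ 0)
    (hqroots : ∀ z : ℂ, q.IsRoot z → ‖z‖ = 1)
    (hreal : ∀ z : ℂ, ‖z‖ = 1 → q.eval z ≠ 0 →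
      ∃ t : ℝ, s.eval z / q.eval z = (t : ℂ))
    (hγabs : ‖γ‖ = 1)
    (hqsi : q = Polynomial.C γ * sharp q) :
    s + Polynomial.C Complex.I * q =
      Polynomial.C γ *
        Polynomial.X ^ (q.natDegree - (s - Polynomial.C Complex.I * q).natDegree) *
        sharp (s - Polynomial.C Complex.I * q) ∧
    s - Polynomial.C Complex.I * q =
      Polynomial.C γ *
        Polynomial.X ^ (q.natDegree - (s + Polynomial.C Complex.I * q).natDegree) *
        sharp (s + Polynomial.C Complex.I * q) := by
  set A := s + Polynomial.C Complex.I * q with hA_def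
  set B := s - Polynomial.C Complex.I * q with hB_def
  have hγ0 : γ ≠ 0 := by intro h; rw [h] at hγabs; simp at hγabs
  have hS : Set.Infinite {z : ℂ | ‖z‖ = 1 ∧ q.eval z ≠ 0} := by
    have h1 : {z : ℂ | ‖z‖ = 1 ∧ q.eval z ≠ 0}
        = {z : ℂ | ‖z‖ = 1} \ {z | q.IsRoot z} := by
      ext w; simp [Polynomial.IsRoot]
    rw [h1]
    exact circle_infinite.diff (Polynomial.finite_setOf_isRoot hq)
  have key : ∀ z : ℂ, ‖z‖ = 1 → q.eval z ≠ 0 →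
      (z ^ B.natDegree * A.eval z = γ * z ^ q.natDegree * (sharp B).eval z ∧
       z ^ A.natDegree * B.eval z = γ * z ^ q.natDegree * (sharp A).eval z) ∧
      (A.eval z ≠ 0 ∧ B.eval z ≠ 0) := by
    intro z hz hqz
    obtain ⟨t, ht⟩ := hreal z hz hqz
    rw [div_eq_iff hqz] at ht
    have hqγ : q.eval z = γ * z ^ q.natDegree * (starRingEnd ℂ) (q.eval z) := by
      conv_lhs => rw [hqsi]
      rw [eval_mul, eval_C, sharp_eval q z hz]; ring
    have hAz : A.eval z = ((t:ℂ) + Complex.I) * q.eval z := by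
      rw [hA_def]; simp only [eval_add, eval_mul, eval_C]; rw [ht]; ring
    have hBz : B.eval z = ((t:ℂ) - Complex.I) * q.eval z := by
      rw [hB_def]; simp only [eval_sub, eval_mul, eval_C]; rw [ht]; ring
    have hcA : (starRingEnd ℂ) (A.eval z) = ((t:ℂ) - Complex.I) * (starRingEnd ℂ) (q.eval z) := by
      rw [hAz, map_mul, map_add, Complex.conj_ofReal, Complex.conj_I]; ring
    have hcB : (starRingEnd ℂ) (B.eval z) = ((t:ℂ) + Complex.I) * (starRingEnd ℂ) (q.eval z) := by
      rw [hBz, map_mul, map_sub, Complex.conj_ofReal, Complex.conj_I]; ring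
    have htI : ((t:ℂ) + Complex.I) ≠ 0 := by
      intro h
      have := congrArg Complex.im h
      simp at this
    have htI' : ((t:ℂ) - Complex.I) ≠ 0 := by
      intro h
      have := congrArg Complex.im h
      simp at this
    refine ⟨⟨?_, ?_⟩, ?_, ?_⟩
    · rw [sharp_eval B z hz, hcB, hAz]
      linear_combination (z ^ B.natDegree * ((t:ℂ) + Complex.I)) * hqγ
    · rw [sharp_eval A z hz, hcA, hBz]
      linear_combination (z ^ A.natDegree * ((t:ℂ) - Complex.I)) * hqγ
    · rw [hAz]; exact mul_ne_zero htI hqz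
    · rw [hBz]; exact mul_ne_zero htI' hqz
  obtain ⟨z0, hz01, hz02⟩ := hS.nonempty
  have hA0 : A ≠ 0 := fun h => ((key z0 hz01 hz02).2.1) (by rw [h]; simp)
  have hB0 : B ≠ 0 := fun h => ((key z0 hz01 hz02).2.2) (by rw [h]; simp)
  have hsA0 : sharp A ≠ 0 := by
    rw [sharp, Ne, Polynomial.reverse_eq_zero, Polynomial.map_eq_zero]; exact hA0
  have hsB0 : sharp B ≠ 0 := by
    rw [sharp, Ne, Polynomial.reverse_eq_zero, Polynomial.map_eq_zero]; exact hB0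
  have hC0 : Polynomial.C γ ≠ 0 := by simpa using hγ0
  have hXp : ∀ n : ℕ, (Polynomial.X : Polynomial ℂ) ^ n ≠ 0 :=
    fun n => pow_ne_zero n Polynomial.X_ne_zero
  have E1 : Polynomial.X ^ B.natDegree * A
      = Polynomial.C γ * Polynomial.X ^ q.natDegree * sharp B := by
    apply Polynomial.eq_of_infinite_eval_eq
    apply hS.mono
    rintro z ⟨hz1, hz2⟩
    have h := ((key z hz1 hz2).1).1
    simp only [Set.mem_setOf_eq, eval_mul, eval_pow, eval_X, eval_C]
    linear_combination h
  have E2 : Polynomial.X ^ A.natDegree * B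
      = Polynomial.C γ * Polynomial.X ^ q.natDegree * sharp A := by
    apply Polynomial.eq_of_infinite_eval_eq
    apply hS.mono
    rintro z ⟨hz1, hz2⟩
    have h := ((key z hz1 hz2).1).2
    simp only [Set.mem_setOf_eq, eval_mul, eval_pow, eval_X, eval_C]
    linear_combination h
  have hsBle : (sharp B).natDegree ≤ B.natDegree := by
    rw [sharp]
    exact le_trans (Polynomial.reverse_natDegree_le _) (le_of_eq (natDegree_map _))
  have hsAle : (sharp A).natDegree ≤ A.natDegree := by
    rw [sharp]
    exact le_trans (Polynomial.reverse_natDegree_le _) (le_of_eq (natDegree_map _))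
  have hdeg1 := congrArg Polynomial.natDegree E1
  rw [natDegree_mul (hXp _) hA0, natDegree_mul (mul_ne_zero hC0 (hXp _)) hsB0,
    natDegree_mul hC0 (hXp _), natDegree_C, natDegree_X_pow] at hdeg1
  have hdeg2 := congrArg Polynomial.natDegree E2
  rw [natDegree_mul (hXp _) hB0, natDegree_mul (mul_ne_zero hC0 (hXp _)) hsA0,
    natDegree_mul hC0 (hXp _), natDegree_C, natDegree_X_pow] at hdeg2
  rw [natDegree_X_pow] at hdeg1 hdeg2
  have hAm : A.natDegree ≤ q.natDegree := by omega
  have hBm : B.natDegree ≤ q.natDegree := by omega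
  constructor
  · apply mul_left_cancel₀ (hXp B.natDegree)
    rw [E1]
    have hmm : B.natDegree + (q.natDegree - B.natDegree) = q.natDegree :=
      Nat.add_sub_cancel' hBm
    conv_lhs => rw [← hmm]
    rw [pow_add]; ring
  · apply mul_left_cancel₀ (hXp A.natDegree)
    rw [E2]
    have hmm : A.natDegree + (q.natDegree - A.natDegree) = q.natDegree :=
      Nat.add_sub_cancel' hAm
    conv_lhs => rw [← hmm]
    rw [pow_add]; ring
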